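/- arXiv:2404.03038 — 4 statements merged into one kernel-verified Lean document; each statement's English description precedes it below -/
import Mathlib

section
/- (Pocklington primality criterion.) Let a, b, c be positive integers such that a² > c > 1, a divides c − 1, b^(c−1) ≡ 1 (mod c), and for every prime p dividing a one has gcd(b^((c−1)/p) − 1, c) = 1. Then c is prime. -/
/-- Pocklington primality criterion. -/
theorem pocklington (a b c : ℕ) (ha : 0 < a) (hb : 0 < b) (hc : 0 < c)
    (h1 : c < a ^ 2) (h2 : 1 < c) (h3 : a ∣ c - 1)
    (h4 : b ^ (c - 1) ≡ 1 [MOD c])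
    (h5 : ∀ p : ℕ, p.Prime → p ∣ a → Nat.gcd (b ^ ((c - 1) / p) - 1) c = 1) :
    c.Prime := by
  by_contra hcp
  -- take the least prime factor q of c
  set q := c.minFac with hq
  have hqprime : q.Prime := Nat.minFac_prime (by omega)
  haveI : Fact q.Prime := ⟨hqprime⟩
  have hqdvd : q ∣ c := Nat.minFac_dvd c
  have hqsq : q ^ 2 ≤ c := Nat.minFac_sq_le_self hc hcp
  have hqa : q < a := by nlinarith [hqprime.two_le]
  have hc1pos : 0 < c - 1 := by omega
  -- b mod q has b^(c-1) = 1
  have hbq : (b : ZMod q) ^ (c - 1) = 1 := by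
    have h := (ZMod.natCast_eq_natCast_iff _ _ _).mpr (h4.of_dvd hqdvd)
    push_cast at h
    exact h
  have hbne : (b : ZMod q) ≠ 0 := by
    intro h
    rw [h, zero_pow (by omega)] at hbq
    exact one_ne_zero hbq.symm
  set d := orderOf ((b : ZMod q)) with hd
  have hdpos : 0 < d :=
    (isOfFinOrder_iff_pow_eq_one.mpr ⟨c - 1, hc1pos, hbq⟩).orderOf_pos
  have hddvd : d ∣ c - 1 := orderOf_dvd_of_pow_eq_one hbq
  have hdq : d ∣ q - 1 :=
    orderOf_dvd_of_pow_eq_one (ZMod.pow_card_sub_one_eq_one hbne)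
  -- key step: a ∣ d
  have had : a ∣ d := by
    rw [← Nat.factorization_le_iff_dvd (by omega) (by omega)]
    intro p
    by_contra hlt
    push_neg at hlt
    by_cases hp : p.Prime
    · -- p divides a
      have hpa : p ∣ a :=
        (Nat.Prime.dvd_iff_one_le_factorization hp (by omega)).mpr (by omega)
      have hpc1 : p ∣ c - 1 := hpa.trans h3
      -- d divides (c-1)/p
      have hddvd' : d ∣ (c - 1) / p := by
        rw [← Nat.factorization_le_iff_dvd (by omega)
          (Nat.div_ne_zero_iff_of_dvd hpc1 |>.mpr ⟨by omega, hp.ne_zero⟩)]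
        intro l
        rw [Nat.factorization_div hpc1, hp.factorization]
        have h1' : d.factorization l ≤ (c - 1).factorization l :=
          (Nat.factorization_le_iff_dvd (by omega) (by omega)).mpr hddvd l
        have h2' : a.factorization p ≤ (c - 1).factorization p :=
          (Nat.factorization_le_iff_dvd (by omega) (by omega)).mpr h3 p
        by_cases hl : l = p
        · subst hl
          simp only [Finsupp.coe_tsub, Pi.sub_apply, Finsupp.single_eq_same]
          omega
        · simp only [Finsupp.coe_tsub, Pi.sub_apply,
            Finsupp.single_eq_of_ne' (Ne.symm hl)]
          omega
      -- hence b^((c-1)/p) = 1 mod q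
      have hpow : (b : ZMod q) ^ ((c - 1) / p) = 1 :=
        orderOf_dvd_iff_pow_eq_one.mp hddvd'
      have hqb : q ∣ b ^ ((c - 1) / p) - 1 := by
        rw [← ZMod.natCast_eq_zero_iff]
        have hbk : 1 ≤ b ^ ((c - 1) / p) := Nat.one_le_pow _ _ hb
        push_cast [Nat.cast_sub hbk]
        rw [hpow]
        ring
      have : q ∣ Nat.gcd (b ^ ((c - 1) / p) - 1) c := Nat.dvd_gcd hqb hqdvd
      rw [h5 p hp hpa] at this
      have := Nat.le_of_dvd one_pos this
      have := hqprime.two_le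
      omega
    · simp [Nat.factorization_eq_zero_of_not_prime a hp] at hlt
  have haq : a ∣ q - 1 := had.trans hdq
  have := Nat.le_of_dvd (by have := hqprime.two_le; omega) haq
  omega
end

section
/- Let a, b, c be positive integers such that a² > c > 1, a divides c − 1, b^(c−1) ≡ 1 (mod c), and for every prime p dividing a one has gcd(b^((c−1)/p) − 1, c) = 1. Then every prime q dividing c satisfies q > a. -/
theorem pocklington_prime_divisor_bound (a b c : ℕ) (ha : 0 < a) (hb : 0 < b) (hc : 0 < c)
    (h1 : c < a ^ 2) (h2 : 1 < c) (h3 : a ∣ c - 1)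
    (h4 : b ^ (c - 1) ≡ 1 [MOD c])
    (h5 : ∀ p : ℕ, p.Prime → p ∣ a → Nat.gcd (b ^ ((c - 1) / p) - 1) c = 1) :
    ∀ q : ℕ, q.Prime → q ∣ c → a < q := by
  intro q hq hqc
  haveI : Fact q.Prime := ⟨hq⟩
  set n := c - 1 with hn
  have hn0 : 0 < n := by omega
  -- b mod q
  set B : ZMod q := (b : ZMod q) with hB
  have hBn : B ^ n = 1 := by
    have h4q : b ^ n ≡ 1 [MOD q] := h4.of_dvd hqc
    have h' : ((b ^ n : ℕ) : ZMod q) = ((1 : ℕ) : ZMod q) :=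
      (ZMod.natCast_eq_natCast_iff _ _ _).mpr h4q
    push_cast at h'
    exact h'
  have hB0 : B ≠ 0 := by
    intro h
    rw [h, zero_pow hn0.ne'] at hBn
    exact zero_ne_one hBn
  set d := orderOf B with hd
  have hd0 : 0 < d := by
    have : IsOfFinOrder B := isOfFinOrder_iff_pow_eq_one.mpr ⟨n, hn0, hBn⟩
    exact this.orderOf_pos
  have hdn : d ∣ n := orderOf_dvd_of_pow_eq_one hBn
  -- a ∣ d
  have had : a ∣ d := by
    rw [← Nat.factorization_le_iff_dvd ha.ne' hd0.ne', Finsupp.le_def]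
    intro p
    by_contra hlt
    push_neg at hlt
    have hp : p.Prime := Nat.prime_of_mem_primeFactors
      (Nat.support_factorization a ▸ Finsupp.mem_support_iff.mpr (by omega))
    have hpa : p ∣ a := Nat.dvd_of_mem_primeFactors
      (Nat.support_factorization a ▸ Finsupp.mem_support_iff.mpr (by omega))
    have hpn : p ∣ n := hpa.trans h3
    have hnp0 : n / p ≠ 0 := by
      have := Nat.le_of_dvd hn0 hpn
      exact (Nat.div_pos this hp.pos).ne'
    have han : a.factorization ≤ n.factorization :=
      (Nat.factorization_le_iff_dvd ha.ne' hn0.ne').mpr h3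
    have hdnp : d ∣ n / p := by
      rw [← Nat.factorization_le_iff_dvd hd0.ne' hnp0, Nat.factorization_div hpn,
        hp.factorization, Finsupp.le_def]
      intro r
      have hdn' : d.factorization ≤ n.factorization :=
        (Nat.factorization_le_iff_dvd hd0.ne' hn0.ne').mpr hdn
      rcases eq_or_ne r p with rfl | hr
      · have h1' := han r
        simp only [Finsupp.coe_tsub, Pi.sub_apply, Finsupp.single_eq_same]
        omega
      · have := hdn' r
        simp only [Finsupp.coe_tsub, Pi.sub_apply, Finsupp.single_eq_of_ne' (Ne.symm hr)]
        omega
    have hmod : b ^ (n / p) ≡ 1 [MOD q] := by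
      have : B ^ (n / p) = 1 := orderOf_dvd_iff_pow_eq_one.mp hdnp
      have : ((b ^ (n / p) : ℕ) : ZMod q) = ((1 : ℕ) : ZMod q) := by push_cast; exact this
      exact (ZMod.natCast_eq_natCast_iff _ _ _).mp this
    have hge : 1 ≤ b ^ (n / p) := Nat.one_le_pow _ _ hb
    have hqd : q ∣ b ^ (n / p) - 1 := (Nat.modEq_iff_dvd' hge).mp hmod.symm
    have : q ∣ Nat.gcd (b ^ (n / p) - 1) c := Nat.dvd_gcd hqd hqc
    rw [h5 p hp hpa] at this
    exact absurd (Nat.eq_one_of_dvd_one this) hq.one_lt.ne'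
  have hdq : d ∣ q - 1 := ZMod.orderOf_dvd_card_sub_one hB0
  have haq : a ∣ q - 1 := had.trans hdq
  have hq2 : 2 ≤ q := hq.two_le
  have := Nat.le_of_dvd (by omega) haq
  omega
end

section
/- Let d ∈ ℕ be squarefree with d ≥ 2 and d ≡ 3 (mod 4), let c be a prime number and let e, f be positive integers with c·f + e² = d and gcd(c, 2e) = 1, and let P be the ideal of ℤ[√d] generated by c and e + √d. Suppose k, m are nonnegative integers and ℓ is a positive integer such that d = k·c^ℓ + (m·c + e)². Then P^ℓ equals the ideal of ℤ[√d] generated by c^ℓ and (m·c + e) + √d, and likewise the ℓ-th power of the ideal generated by c and e − √d equals the ideal generated by c^ℓ and (m·c + e) − √d. -/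
/-- `(A ⊔ B)^n ≤ A^n ⊔ B` for ideals. -/
lemma aux_sup_pow_le {R : Type*} [CommRing R] (A B : Ideal R) (n : ℕ) :
    (A ⊔ B) ^ n ≤ A ^ n ⊔ B := by
  induction n with
  | zero => simp [Ideal.one_eq_top]
  | succ n ih =>
    rw [pow_succ, pow_succ]
    calc (A ⊔ B) ^ n * (A ⊔ B) ≤ (A ^ n ⊔ B) * (A ⊔ B) := Ideal.mul_mono_left ih
      _ = A ^ n * A ⊔ A ^ n * B ⊔ (B * A ⊔ B * B) := by
          rw [Ideal.sup_mul, Ideal.mul_sup, Ideal.mul_sup]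
      _ ≤ A ^ n * A ⊔ B := by
          refine sup_le (sup_le le_sup_left (le_sup_of_le_right Ideal.mul_le_right))
            (sup_le (le_sup_of_le_right Ideal.mul_le_left)
              (le_sup_of_le_right Ideal.mul_le_left))

/-- Key lemma: powers of a split prime ideal in `ℤ√d`, stated for a generic square
root `w` of `d` (so it applies to both `√d` and `-√d`). -/
lemma aux_key (d : ℤ) (w : ℤ√d) (hw : w * w = (d : ℤ√d))
    (c e a k : ℤ) (ℓ : ℕ) (m : ℤ) (hme : a = m * c + e)
    (hk : (a : ℤ√d) * a - d = -((k : ℤ√d) * (c : ℤ√d) ^ ℓ))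
    (hcop : IsCoprime c (2 * a)) :
    (Ideal.span {(c : ℤ√d), (e : ℤ√d) + w}) ^ ℓ =
      Ideal.span {(c : ℤ√d) ^ ℓ, (a : ℤ√d) + w} := by
  set P : Ideal (ℤ√d) := Ideal.span {(c : ℤ√d), (e : ℤ√d) + w} with hP
  set Q : Ideal (ℤ√d) := Ideal.span {(c : ℤ√d) ^ ℓ, (a : ℤ√d) + w} with hQ
  have hcP : (c : ℤ√d) ∈ P := Ideal.subset_span (by simp)
  have hewP : (e : ℤ√d) + w ∈ P := Ideal.subset_span (by simp)
  have hawP : (a : ℤ√d) + w ∈ P := by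
    have : (a : ℤ√d) + w = (m : ℤ√d) * c + ((e : ℤ√d) + w) := by
      push_cast [hme]; ring
    rw [this]
    exact P.add_mem (P.mul_mem_left _ hcP) hewP
  have hclQ : (c : ℤ√d) ^ ℓ ∈ Q := Ideal.subset_span (by simp)
  have hawQ : (a : ℤ√d) + w ∈ Q := Ideal.subset_span (by simp)
  apply le_antisymm
  · -- P^ℓ ≤ Q
    have hPI : P ≤ Ideal.span {(c : ℤ√d)} ⊔ Ideal.span {(a : ℤ√d) + w} := by
      rw [hP, Ideal.span_insert]
      apply sup_le le_sup_left
      rw [Ideal.span_le]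
      intro x hx
      simp only [Set.mem_singleton_iff] at hx
      subst hx
      have : (e : ℤ√d) + w = ((a : ℤ√d) + w) + (-(m : ℤ√d)) * c := by
        push_cast [hme]; ring
      rw [this]
      exact Submodule.add_mem _ (Submodule.mem_sup_right
        (Ideal.mem_span_singleton_self _))
        (Submodule.mem_sup_left (Ideal.mul_mem_left _ _
          (Ideal.mem_span_singleton_self _)))
    calc P ^ ℓ ≤ (Ideal.span {(c : ℤ√d)} ⊔ Ideal.span {(a : ℤ√d) + w}) ^ ℓ :=
          Ideal.pow_right_mono hPI ℓ
      _ ≤ Ideal.span {(c : ℤ√d)} ^ ℓ ⊔ Ideal.span {(a : ℤ√d) + w} :=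
          aux_sup_pow_le _ _ ℓ
      _ ≤ Q := by
          rw [Ideal.span_singleton_pow]
          apply sup_le
          · rw [Ideal.span_le]; intro x hx
            simp only [Set.mem_singleton_iff] at hx; subst hx; exact hclQ
          · rw [Ideal.span_le]; intro x hx
            simp only [Set.mem_singleton_iff] at hx; subst hx; exact hawQ
  · -- Q ≤ P^ℓ
    have hclP : (c : ℤ√d) ^ ℓ ∈ P ^ ℓ := Ideal.pow_mem_pow hcP ℓ
    -- P and span{a - w} are coprime
    have hcop1 : P ⊔ Ideal.span {(a : ℤ√d) - w} = ⊤ := by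
      rw [eq_top_iff, ← Ideal.span_singleton_one]
      rw [Ideal.span_le]
      intro x hx
      simp only [Set.mem_singleton_iff] at hx; subst hx
      obtain ⟨u, v, huv⟩ := hcop
      have h1 : (1 : ℤ√d) = (u : ℤ√d) * c + (v : ℤ√d) * (((a : ℤ√d) + w) + ((a : ℤ√d) - w)) := by
        have := congrArg (fun z : ℤ => (z : ℤ√d)) huv
        push_cast at this ⊢
        rw [← this]; ring
      rw [h1]
      refine Submodule.add_mem _ (Submodule.mem_sup_left (P.mul_mem_left _ hcP)) ?_
      rw [mul_add]
      exact Submodule.add_mem _ (Submodule.mem_sup_left (P.mul_mem_left _ hawP))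
        (Submodule.mem_sup_right (Ideal.mul_mem_left _ _
          (Ideal.mem_span_singleton_self _)))
    have hcopP : IsCoprime P (Ideal.span {(a : ℤ√d) - w}) :=
      Ideal.isCoprime_iff_sup_eq.mpr hcop1
    have hcopPl : IsCoprime (P ^ ℓ) (Ideal.span {(a : ℤ√d) - w}) :=
      hcopP.pow_left
    have hsup : P ^ ℓ ⊔ Ideal.span {(a : ℤ√d) - w} = ⊤ :=
      Ideal.isCoprime_iff_sup_eq.mp hcopPl
    have hawPl : (a : ℤ√d) + w ∈ P ^ ℓ := by
      have h1 : (1 : ℤ√d) ∈ P ^ ℓ ⊔ Ideal.span {(a : ℤ√d) - w} := by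
        rw [hsup]; trivial
      obtain ⟨p, hp, q, hq, hpq⟩ := Submodule.mem_sup.mp h1
      obtain ⟨t, ht⟩ := Ideal.mem_span_singleton'.mp hq
      have : (a : ℤ√d) + w = ((a : ℤ√d) + w) * p + t * (-((k : ℤ√d) * (c : ℤ√d) ^ ℓ)) := by
        rw [← hk]
        have : ((a : ℤ√d) + w) * ((a : ℤ√d) - w) = (a : ℤ√d) * a - d := by
          rw [← hw]; ring
        calc (a : ℤ√d) + w = ((a : ℤ√d) + w) * (p + q) := by rw [hpq, mul_one]
          _ = ((a : ℤ√d) + w) * p + ((a : ℤ√d) + w) * (t * ((a : ℤ√d) - w)) := by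
              rw [← ht]; ring
          _ = ((a : ℤ√d) + w) * p + t * ((a : ℤ√d) * a - d) := by rw [← this]; ring
      rw [this]
      refine Submodule.add_mem _ (Ideal.mul_mem_left _ _ hp) ?_
      have : t * (-((k : ℤ√d) * (c : ℤ√d) ^ ℓ)) = (-(t * k)) * (c : ℤ√d) ^ ℓ := by ring
      rw [this]
      exact Ideal.mul_mem_left _ _ hclP
    rw [hQ, Ideal.span_le]
    intro x hx
    simp only [Set.mem_insert_iff, Set.mem_singleton_iff] at hx
    rcases hx with rfl | rfl
    · exact hclP
    · exact hawPl

theorem pow_of_split_prime_ideal_in_Zsqrtd (d : ℕ) (hdsf : Squarefree d) (hd2 : 2 ≤ d)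
    (hd4 : d % 4 = 3) (c e f : ℕ) (hc : c.Prime) (he : 0 < e) (hf : 0 < f)
    (hcef : c * f + e ^ 2 = d) (hgcd : Nat.gcd c (2 * e) = 1)
    (k m ℓ : ℕ) (hℓ : 0 < ℓ) (hkml : d = k * c ^ ℓ + (m * c + e) ^ 2) :
    (Ideal.span {(c : ℤ√(d : ℤ)), (e : ℤ√(d : ℤ)) + Zsqrtd.sqrtd}) ^ ℓ =
      Ideal.span {((c : ℤ√(d : ℤ))) ^ ℓ, ((m * c + e : ℕ) : ℤ√(d : ℤ)) + Zsqrtd.sqrtd} ∧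
    (Ideal.span {(c : ℤ√(d : ℤ)), (e : ℤ√(d : ℤ)) - Zsqrtd.sqrtd}) ^ ℓ =
      Ideal.span {((c : ℤ√(d : ℤ))) ^ ℓ, ((m * c + e : ℕ) : ℤ√(d : ℤ)) - Zsqrtd.sqrtd} := by
  set a : ℤ := (m : ℤ) * c + e with ha
  have hme : a = (m : ℤ) * (c : ℤ) + (e : ℤ) := rfl
  have hk : ((a : ℤ√(d : ℤ)) : ℤ√(d : ℤ)) * a - (d : ℤ) =
      -(((k : ℤ) : ℤ√(d : ℤ)) * ((c : ℤ) : ℤ√(d : ℤ)) ^ ℓ) := by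
    have hZ : a * a - (d : ℤ) = -((k : ℤ) * (c : ℤ) ^ ℓ) := by
      have : (d : ℤ) = (k : ℤ) * (c : ℤ) ^ ℓ + ((m : ℤ) * c + e) ^ 2 := by
        exact_mod_cast congrArg (fun n : ℕ => (n : ℤ)) hkml
      rw [ha, this]; ring
    have := congrArg (fun z : ℤ => (z : ℤ√(d : ℤ))) hZ
    push_cast at this ⊢
    linear_combination this
  have hcop : IsCoprime (c : ℤ) (2 * a) := by
    have h1 : IsCoprime (c : ℤ) (2 * (e : ℤ)) := by
      rw [Int.isCoprime_iff_gcd_eq_one]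
      have : ((c : ℤ).gcd (2 * (e : ℤ))) = Nat.gcd c (2 * e) := by
        rw [Int.gcd]
        simp [Int.natAbs_mul]
      rw [this, hgcd]
    have : 2 * a = 2 * (e : ℤ) + (c : ℤ) * (2 * m) := by rw [ha]; ring
    rw [this]
    exact h1.add_mul_left_right _
  have hcast : ((m * c + e : ℕ) : ℤ√(d : ℤ)) = ((a : ℤ) : ℤ√(d : ℤ)) := by
    push_cast [ha]; ring
  have hce : ((c : ℕ) : ℤ√(d : ℤ)) = ((c : ℤ) : ℤ√(d : ℤ)) := by push_cast; ring
  have hee : ((e : ℕ) : ℤ√(d : ℤ)) = ((e : ℤ) : ℤ√(d : ℤ)) := by push_cast; ring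
  constructor
  · have := aux_key (d : ℤ) Zsqrtd.sqrtd Zsqrtd.dmuld (c : ℤ) (e : ℤ) a k ℓ m hme hk hcop
    rw [hcast, hce, hee]
    exact this
  · have hw : (-Zsqrtd.sqrtd : ℤ√(d : ℤ)) * (-Zsqrtd.sqrtd) = ((d : ℤ) : ℤ√(d : ℤ)) := by
      rw [neg_mul_neg, Zsqrtd.dmuld]
    have := aux_key (d : ℤ) (-Zsqrtd.sqrtd) hw (c : ℤ) (e : ℤ) a k ℓ m hme hk hcop
    rw [hcast, hce, hee, sub_eq_add_neg, sub_eq_add_neg]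
    exact this
end

section
/- Let d ∈ ℕ be a prime with d ≡ 3 (mod 4), and let ε be a unit of ℤ[√d] whose image ε_ℝ in ℝ is greater than 1 and minimal among the real images of all units of ℤ[√d] that are greater than 1 (the fundamental unit). Suppose η is a unit of ℤ[√d] whose real image η_ℝ satisfies η_ℝ > 0, η_ℝ ≠ 1 and ε_ℝ^(−d) < η_ℝ < ε_ℝ^d, and such that d divides η.im. Then d divides ε.im. -/
private lemma zsqrtd_pow_mod (d : ℤ) (z : ℤ√d) :
    ∀ m : ℕ, (z ^ m).re ≡ z.re ^ m [ZMOD d] ∧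
      (z ^ (m + 1)).im ≡ ((m : ℤ) + 1) * z.re ^ m * z.im [ZMOD d] := by
  intro m
  induction m with
  | zero => simp [pow_succ]
  | succ n ih =>
    obtain ⟨hre, him⟩ := ih
    have hdz : (d * ((z ^ n).im * z.im)) ≡ 0 [ZMOD d] :=
      Int.modEq_zero_iff_dvd.mpr ⟨(z ^ n).im * z.im, rfl⟩
    have hre' : (z ^ (n + 1)).re ≡ z.re ^ (n + 1) [ZMOD d] := by
      have h1 : (z ^ (n + 1)).re = (z ^ n).re * z.re + d * ((z ^ n).im * z.im) := by
        rw [pow_succ, Zsqrtd.re_mul]; ring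
      calc (z ^ (n + 1)).re ≡ (z ^ n).re * z.re + 0 [ZMOD d] := by
            rw [h1]; exact Int.ModEq.add (Int.ModEq.refl _) hdz
        _ = (z ^ n).re * z.re := by ring
        _ ≡ z.re ^ n * z.re [ZMOD d] := hre.mul_right _
        _ = z.re ^ (n + 1) := by ring
    refine ⟨hre', ?_⟩
    have h2 : (z ^ (n + 1 + 1)).im = (z ^ (n + 1)).re * z.im + (z ^ (n + 1)).im * z.re := by
      rw [pow_succ, Zsqrtd.im_mul]
    calc (z ^ (n + 1 + 1)).im
        ≡ z.re ^ (n + 1) * z.im + (((n : ℤ) + 1) * z.re ^ n * z.im) * z.re [ZMOD d] := by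
          rw [h2]; exact Int.ModEq.add (hre'.mul_right _) (him.mul_right _)
      _ = ((n : ℤ) + 1 + 1) * z.re ^ (n + 1) * z.im := by ring
      _ ≡ (((n : ℕ) + 1 : ℕ) + 1) * z.re ^ (n + 1) * z.im [ZMOD d] := by push_cast; rfl

theorem d_dvd_im_fundamental_of_special_unit (d : ℕ) (hd : d.Prime) (hd4 : d % 4 = 3)
    (ε η : (ℤ√(d : ℤ))ˣ)
    (hε1 : 1 < Zsqrtd.toReal (Int.natCast_nonneg d) (ε : ℤ√(d : ℤ)))
    (hεmin : ∀ ζ : (ℤ√(d : ℤ))ˣ,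
        1 < Zsqrtd.toReal (Int.natCast_nonneg d) (ζ : ℤ√(d : ℤ)) →
        Zsqrtd.toReal (Int.natCast_nonneg d) (ε : ℤ√(d : ℤ)) ≤
          Zsqrtd.toReal (Int.natCast_nonneg d) (ζ : ℤ√(d : ℤ)))
    (hηpos : 0 < Zsqrtd.toReal (Int.natCast_nonneg d) (η : ℤ√(d : ℤ)))
    (hηne : Zsqrtd.toReal (Int.natCast_nonneg d) (η : ℤ√(d : ℤ)) ≠ 1)
    (hηlb : (Zsqrtd.toReal (Int.natCast_nonneg d) (ε : ℤ√(d : ℤ))) ^ (-(d : ℤ)) <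
      Zsqrtd.toReal (Int.natCast_nonneg d) (η : ℤ√(d : ℤ)))
    (hηub : Zsqrtd.toReal (Int.natCast_nonneg d) (η : ℤ√(d : ℤ)) <
      (Zsqrtd.toReal (Int.natCast_nonneg d) (ε : ℤ√(d : ℤ))) ^ (d : ℤ))
    (hηim : (d : ℤ) ∣ (η : ℤ√(d : ℤ)).im) :
    (d : ℤ) ∣ (ε : ℤ√(d : ℤ)).im := by
  have hp : Prime (d : ℤ) := Nat.prime_iff_prime_int.mp hd
  set f := Zsqrtd.toReal (d := (d : ℤ)) (Int.natCast_nonneg d) with hf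
  -- d is not a perfect square
  have hnsq : ∀ n : ℤ, (d : ℤ) ≠ n * n := by
    intro n hn
    have hdn : (d : ℤ) ∣ n := hp.dvd_of_dvd_pow (n := 2) (by rw [sq, ← hn])
    obtain ⟨c, rfl⟩ := hdn
    have h2 : (2 : ℤ) ≤ (d : ℤ) := by exact_mod_cast hd.two_le
    rcases eq_or_ne c 0 with rfl | hc
    · simp at hn; omega
    · have hc1 : 1 ≤ c * c := by rcases lt_or_gt_of_ne hc with h | h <;> nlinarith
      have h3 : (d : ℤ) * (d : ℤ) * (c * c) = (d : ℤ) := by linear_combination -hn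
      have h4 := mul_le_mul_of_nonneg_left hc1 (by positivity : (0:ℤ) ≤ (d:ℤ)*(d:ℤ))
      have h5 := mul_le_mul_of_nonneg_left h2 (by linarith : (0:ℤ) ≤ (d:ℤ))
      nlinarith
  have hinj := Zsqrtd.toReal_injective (Int.natCast_nonneg d) hnsq
  -- units map to ℝˣ
  let F : (ℤ√(d : ℤ))ˣ →* ℝˣ := Units.map f.toMonoidHom
  have hFval : ∀ u : (ℤ√(d : ℤ))ˣ, ((F u : ℝˣ) : ℝ) = f (u : ℤ√(d : ℤ)) := fun u => rfl
  have hE1 : (1 : ℝ) < ((F ε : ℝˣ) : ℝ) := by rw [hFval]; exact hε1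
  have hE0 : (0 : ℝ) < ((F ε : ℝˣ) : ℝ) := lt_trans one_pos hE1
  -- η = ε ^ k for some integer k
  obtain ⟨k, hk1, hk2⟩ := exists_mem_Ico_zpow (y := ((F ε : ℝˣ) : ℝ)) hηpos hε1
  have hzpow : ∀ j : ℤ, ((F (ε ^ j) : ℝˣ) : ℝ) = ((F ε : ℝˣ) : ℝ) ^ j := by
    intro j; rw [map_zpow, Units.val_zpow_eq_zpow_val]
  have hζ : η * (ε ^ k)⁻¹ = 1 := by
    by_contra hne
    have hζpos : f ((η * (ε ^ k)⁻¹ : (ℤ√(d : ℤ))ˣ) : ℤ√(d : ℤ))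
        = f (η : ℤ√(d : ℤ)) * (((F ε : ℝˣ) : ℝ) ^ k)⁻¹ := by
      have : ((F (η * (ε ^ k)⁻¹) : ℝˣ) : ℝ) = ((F η : ℝˣ) : ℝ) * (((F (ε ^ k) : ℝˣ) : ℝ))⁻¹ := by
        rw [map_mul, map_inv, Units.val_mul, ← Units.val_inv_eq_inv_val]
      rw [← hFval, this, hFval, hzpow]
    have hge : 1 ≤ f ((η * (ε ^ k)⁻¹ : (ℤ√(d : ℤ))ˣ) : ℤ√(d : ℤ)) := by
      rw [hζpos]
      rw [← div_eq_mul_inv, le_div_iff₀ (zpow_pos hE0 k)]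
      simpa using hk1
    have hlt : f ((η * (ε ^ k)⁻¹ : (ℤ√(d : ℤ))ˣ) : ℤ√(d : ℤ)) < ((F ε : ℝˣ) : ℝ) := by
      rw [hζpos, ← div_eq_mul_inv, div_lt_iff₀ (zpow_pos hE0 k)]
      calc f (η : ℤ√(d : ℤ)) < ((F ε : ℝˣ) : ℝ) ^ (k + 1) := hk2
        _ = ((F ε : ℝˣ) : ℝ) * ((F ε : ℝˣ) : ℝ) ^ k := by
            rw [zpow_add_one₀ (ne_of_gt hE0)]; ring
    rcases eq_or_lt_of_le hge with heq | hgt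
    · apply hne
      apply Units.ext
      apply hinj
      rw [← heq]; exact (map_one f).symm
    · exact absurd (hεmin _ hgt) (not_le.mpr hlt)
  have hηk : η = ε ^ k := by
    have := hζ
    rwa [mul_inv_eq_one] at this
  -- bounds on k
  have hfη : f (η : ℤ√(d : ℤ)) = ((F ε : ℝˣ) : ℝ) ^ k := by
    rw [← hFval, hηk, hzpow]
  have hklt : k < (d : ℤ) := by
    rw [hfη] at hηub
    exact (zpow_lt_zpow_iff_right₀ hE1).mp hηub
  have hkgt : -(d : ℤ) < k := by
    rw [hfη] at hηlb
    exact (zpow_lt_zpow_iff_right₀ hE1).mp hηlb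
  have hk0 : k ≠ 0 := by
    intro h
    apply hηne
    rw [hfη, h, zpow_zero]
  -- norm of ε is ±1, so d does not divide ε.re
  have hnormε : Zsqrtd.norm (ε : ℤ√(d : ℤ)) = 1 ∨ Zsqrtd.norm (ε : ℤ√(d : ℤ)) = -1 :=
    Int.isUnit_iff.mp ((Zsqrtd.isUnit_iff_norm_isUnit _).mp ε.isUnit)
  have hdre : ¬ (d : ℤ) ∣ (ε : ℤ√(d : ℤ)).re := by
    intro hdvd
    have h1 : (d : ℤ) ∣ Zsqrtd.norm (ε : ℤ√(d : ℤ)) := by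
      rw [Zsqrtd.norm_def]
      exact dvd_sub (hdvd.mul_right _) ((dvd_mul_right _ _).mul_right _)
    have h2 : (2 : ℤ) ≤ (d : ℤ) := by exact_mod_cast hd.two_le
    have h3 : (d : ℤ) ∣ 1 := by
      rcases hnormε with h | h
      · rwa [h] at h1
      · rw [h] at h1; exact (dvd_neg).mp h1
    have := Int.le_of_dvd one_pos h3
    omega
  -- find a unit w with d ∣ w.im and w = ε ^ k.natAbs
  have key : ∃ w : (ℤ√(d : ℤ))ˣ, (d : ℤ) ∣ (w : ℤ√(d : ℤ)).im ∧
      (w : ℤ√(d : ℤ)) = (ε : ℤ√(d : ℤ)) ^ k.natAbs := by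
    rcases le_or_gt 0 k with hk | hk
    · refine ⟨η, hηim, ?_⟩
      rw [hηk]
      have h6 : ε ^ k = ε ^ k.natAbs := by rw [← zpow_natCast, Int.natAbs_of_nonneg hk]
      rw [h6, Units.val_pow_eq_pow_val]
    · refine ⟨η⁻¹, ?_, ?_⟩
      · -- inverse also has d ∣ im
        have hnormη : Zsqrtd.norm (η : ℤ√(d : ℤ)) = 1 ∨ Zsqrtd.norm (η : ℤ√(d : ℤ)) = -1 :=
          Int.isUnit_iff.mp ((Zsqrtd.isUnit_iff_norm_isUnit _).mp η.isUnit)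
        set n : ℤ := Zsqrtd.norm (η : ℤ√(d : ℤ)) with hn
        have hnn : n * n = 1 := by rcases hnormη with h | h <;> rw [h] <;> norm_num
        have h1 : (η : ℤ√(d : ℤ)) * ((n : ℤ√(d : ℤ)) * star (η : ℤ√(d : ℤ))) = 1 := by
          have h2 : (η : ℤ√(d : ℤ)) * star (η : ℤ√(d : ℤ)) = (n : ℤ√(d : ℤ)) :=
            (Zsqrtd.norm_eq_mul_conj _).symm
          calc (η : ℤ√(d : ℤ)) * ((n : ℤ√(d : ℤ)) * star (η : ℤ√(d : ℤ)))
              = (n : ℤ√(d : ℤ)) * ((η : ℤ√(d : ℤ)) * star (η : ℤ√(d : ℤ))) := by ring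
            _ = ((n * n : ℤ) : ℤ√(d : ℤ)) := by rw [h2, Int.cast_mul]
            _ = 1 := by rw [hnn, Int.cast_one]
        have hinv : ((η⁻¹ : (ℤ√(d : ℤ))ˣ) : ℤ√(d : ℤ))
            = (n : ℤ√(d : ℤ)) * star (η : ℤ√(d : ℤ)) := by
          calc ((η⁻¹ : (ℤ√(d : ℤ))ˣ) : ℤ√(d : ℤ))
              = ((η⁻¹ : (ℤ√(d : ℤ))ˣ) : ℤ√(d : ℤ)) *
                ((η : ℤ√(d : ℤ)) * ((n : ℤ√(d : ℤ)) * star (η : ℤ√(d : ℤ)))) := by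
                rw [h1, mul_one]
            _ = (((η⁻¹ : (ℤ√(d : ℤ))ˣ) : ℤ√(d : ℤ)) * (η : ℤ√(d : ℤ))) *
                ((n : ℤ√(d : ℤ)) * star (η : ℤ√(d : ℤ))) := by ring
            _ = (n : ℤ√(d : ℤ)) * star (η : ℤ√(d : ℤ)) := by rw [η.inv_mul, one_mul]
        rw [hinv]
        have him : ((n : ℤ√(d : ℤ)) * star (η : ℤ√(d : ℤ))).im = n * (-(η : ℤ√(d : ℤ)).im) := by
          simp [Zsqrtd.im_mul]
        rw [him]
        exact Dvd.dvd.mul_left (hηim.neg_right) n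
      · rw [hηk, ← zpow_neg]
        have h6 : ε ^ (-k) = ε ^ k.natAbs := by rw [← zpow_natCast]; congr 1; omega
        rw [h6, Units.val_pow_eq_pow_val]
  obtain ⟨w, hwim, hwpow⟩ := key
  obtain ⟨m, hm⟩ : ∃ m, k.natAbs = m + 1 :=
    Nat.exists_eq_succ_of_ne_zero (Int.natAbs_ne_zero.mpr hk0)
  rw [hwpow, hm] at hwim
  have hmod := (zsqrtd_pow_mod (d : ℤ) (ε : ℤ√(d : ℤ)) m).2
  have hdvd : (d : ℤ) ∣ ((m : ℤ) + 1) * (ε : ℤ√(d : ℤ)).re ^ m * (ε : ℤ√(d : ℤ)).im := by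
    have := Int.modEq_zero_iff_dvd.mpr hwim
    exact Int.modEq_zero_iff_dvd.mp (hmod.symm.trans this)
  have hmd : (m : ℤ) + 1 < (d : ℤ) := by omega
  rcases hp.dvd_mul.mp hdvd with h | h
  · rcases hp.dvd_mul.mp h with h' | h'
    · have := Int.le_of_dvd (by positivity) h'
      omega
    · exact absurd (hp.dvd_of_dvd_pow h') hdre
  · exact h
end
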